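/- Let m ≤ k ≤ n be positive integers, let A = [a_1,…,a_n] be the m×n real matrix with columns a_i, let x̂ ∈ [0,1]^n, and let S ⊆ [n] with |S| = s ≤ k. In the polynomial ring ℝ[t₁,t₂,t₃], set y_i = t₃ for i ∈ S and y_i = x̂_i t₂ for i ∉ S, and define F(t₁,t₂,t₃) = det(I_n + t₁ · AᵀA · diag(y) + diag(y)) (which equals det(I_n + t₁ diag(y)^{1/2} AᵀA diag(y)^{1/2} + diag(y)) since determinants are invariant under similarity). Then the coefficient of the monomial t₁^m t₂^{k−s} t₃^{s} in F equals Σ_{R ⊆ [n], |R| = m, |R∖S| ≤ k−s} (∏_{j∈R∖S} x̂_j) · det(Σ_{i∈R} a_i a_iᵀ) · Σ_{W ⊆ [n]∖(S∪R), |W| = k−s−|R∖S|} ∏_{j∈W} x̂_j. -/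

import Mathlib

open Matrix Finset

open MvPolynomial

section AuxExpansion

variable {ι : Type*} [Fintype ι] [DecidableEq ι] {R : Type*} [CommRing R]

lemma det_piecewise_one (M : Matrix ι ι R) (T : Finset ι) :
    Matrix.det (T.piecewise M (1 : Matrix ι ι R)) =
      (M.submatrix ((↑) : T → ι) ((↑) : T → ι)).det := by
  rw [← Matrix.det_submatrix_equiv_self (Equiv.sumCompl (fun i => i ∈ T))
    (T.piecewise M (1 : Matrix ι ι R))]
  have h : Matrix.submatrix (T.piecewise M (1 : Matrix ι ι R))
      (Equiv.sumCompl (fun i => i ∈ T)) (Equiv.sumCompl (fun i => i ∈ T)) =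
      Matrix.fromBlocks (M.submatrix ((↑) : T → ι) ((↑) : T → ι))
        (M.submatrix ((↑) : T → ι) ((↑) : {a // ¬ a ∈ T} → ι)) 0 1 := by
    ext i j
    cases i with
    | inl i =>
      cases j with
      | inl j => simp [Matrix.submatrix, Finset.piecewise, i.2]
      | inr j => simp [Matrix.submatrix, Finset.piecewise, i.2]
    | inr i =>
      cases j with
      | inl j =>
        have : (i : ι) ≠ (j : ι) := fun h => i.2 (h ▸ j.2)
        simp [Matrix.submatrix, Finset.piecewise, i.2, Matrix.one_apply, this]
      | inr j =>
        simp [Matrix.submatrix, Finset.piecewise, i.2, Matrix.one_apply, Subtype.ext_iff]; congr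
  rw [h, Matrix.det_fromBlocks_zero₂₁, Matrix.det_one, mul_one]

lemma det_one_add_eq_sum (M : Matrix ι ι R) :
    (1 + M).det = ∑ T : Finset ι, (M.submatrix ((↑) : T → ι) ((↑) : T → ι)).det := by
  rw [add_comm]
  exact ((Matrix.detRowAlternating (R := R) (n := ι)).toMultilinearMap.map_add_univ
      M (1 : Matrix ι ι R)).trans (Finset.sum_congr rfl fun T _ => det_piecewise_one M T)

lemma det_submatrix_subtype_map (B : Matrix ι ι R) (T : Finset ι) (P : Finset T) :
    ((B.submatrix ((↑) : T → ι) ((↑) : T → ι)).submatrix ((↑) : P → T) ((↑) : P → T)).det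
      = (B.submatrix ((↑) : (P.map (Function.Embedding.subtype (· ∈ T))) → ι)
          ((↑) : (P.map (Function.Embedding.subtype (· ∈ T))) → ι)).det := by
  have hg : Function.Bijective
      (fun x : P => (⟨x.1.1, Finset.mem_map_of_mem _ x.2⟩ :
        (P.map (Function.Embedding.subtype (· ∈ T)) : Finset ι))) := by
    constructor
    · intro x y h
      have := congrArg Subtype.val h
      exact Subtype.ext (Subtype.ext this)
    · rintro ⟨y, hy⟩
      obtain ⟨a, ha, rfl⟩ := Finset.mem_map.mp hy
      exact ⟨⟨a, ha⟩, rfl⟩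
  rw [← Matrix.det_submatrix_equiv_self (Equiv.ofBijective _ hg)]
  rfl

lemma det_one_add_smul_submatrix (c : R) (B : Matrix ι ι R) (T : Finset ι) :
    (1 + c • (B.submatrix ((↑) : T → ι) ((↑) : T → ι))).det
      = ∑ P ∈ T.powerset, c ^ P.card *
          (B.submatrix ((↑) : P → ι) ((↑) : P → ι)).det := by
  rw [det_one_add_eq_sum]
  refine Finset.sum_nbij' (fun P : Finset T => P.map (Function.Embedding.subtype (· ∈ T)))
    (fun P => P.subtype (· ∈ T)) ?_ ?_ ?_ ?_ ?_
  · intro P _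
    rw [Finset.mem_powerset]
    intro x hx
    obtain ⟨a, _, rfl⟩ := Finset.mem_map.mp hx
    exact a.2
  · intro P _; exact Finset.mem_univ _
  · intro P _
    ext a
    simp [Finset.mem_subtype, Finset.mem_map, Function.Embedding.subtype, Subtype.ext_iff]
    constructor
    · rintro ⟨b, hb, hP, h⟩
      obtain rfl : b = a.1 := h
      exact hP
    · intro h
      exact ⟨a.1, a.2, h, rfl⟩
  · intro P hP
    exact Finset.subtype_map_of_mem (fun x hx => Finset.mem_powerset.mp hP hx)
  · intro P _
    rw [Matrix.submatrix_smul, Pi.smul_apply, Pi.smul_apply, Matrix.det_smul,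
      det_submatrix_subtype_map, Finset.card_map, Fintype.card_coe]

end AuxExpansion

lemma submatrix_mul_diagonal {ι κ R : Type*} [Fintype ι] [Fintype κ] [DecidableEq ι]
    [DecidableEq κ] [CommRing R] (A : Matrix ι ι R) (d : ι → R) (f : κ → ι) :
    (A * diagonal d).submatrix f f = (A.submatrix f f) * diagonal (d ∘ f) := by
  ext i j
  simp [Matrix.mul_diagonal]

lemma det_gram {m n : ℕ} (a : Fin n → Fin m → ℝ) (P : Finset (Fin n)) (hP : P.card = m) :
    ((Matrix.of fun i j => ∑ l, a i l * a j l : Matrix (Fin n) (Fin n) ℝ).submatrix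
        ((↑) : P → Fin n) ((↑) : P → Fin n)).det
      = (∑ i ∈ P, vecMulVec (a i) (a i)).det := by
  have hc : Fintype.card (Fin m) = Fintype.card P := by
    simp [Fintype.card_coe, hP]
  let e : Fin m ≃ P := Fintype.equivOfCardEq hc
  let Q : Matrix (Fin m) (Fin m) ℝ := Matrix.of fun i l => a (e i).1 l
  rw [← Matrix.det_submatrix_equiv_self e]
  have h1 : ((Matrix.of fun i j => ∑ l, a i l * a j l : Matrix (Fin n) (Fin n) ℝ).submatrix
      ((↑) : P → Fin n) ((↑) : P → Fin n)).submatrix e e = Q * Qᵀ := by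
    ext i j
    simp [Q, Matrix.mul_apply]
  rw [h1, Matrix.det_mul, mul_comm, ← Matrix.det_mul]
  congr 1
  ext l l'
  rw [Matrix.mul_apply]
  rw [show (∑ i ∈ P, vecMulVec (a i) (a i)) l l' = ∑ i ∈ P, a i l * a i l' by
    simp [Matrix.sum_apply, Matrix.vecMulVec_apply]]
  rw [← Finset.sum_coe_sort P (fun i => a i l * a i l'), ← Equiv.sum_comp e]
  simp [Q, mul_comm]

lemma finsupp_triple_eq_iff (a b c a' b' c' : ℕ) :
    (Finsupp.single (0 : Fin 3) a + Finsupp.single 1 b + Finsupp.single 2 c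
      = Finsupp.single (0 : Fin 3) a' + Finsupp.single 1 b' + Finsupp.single 2 c')
      ↔ a = a' ∧ b = b' ∧ c = c' := by
  constructor
  · intro h
    refine ⟨?_, ?_, ?_⟩
    · simpa using DFunLike.congr_fun h 0
    · simpa using DFunLike.congr_fun h 1
    · simpa using DFunLike.congr_fun h 2
  · rintro ⟨rfl, rfl, rfl⟩; rfl

lemma coeff_C_mul_X_pows (r : ℝ) (A B C' : ℕ) (μ : Fin 3 →₀ ℕ) :
    MvPolynomial.coeff μ
      ((MvPolynomial.C r : MvPolynomial (Fin 3) ℝ) * X 0 ^ A * X 1 ^ B * X 2 ^ C')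
      = if (Finsupp.single (0 : Fin 3) A + Finsupp.single 1 B + Finsupp.single 2 C' = μ)
          then r else 0 := by
  have : (MvPolynomial.C r : MvPolynomial (Fin 3) ℝ) * X 0 ^ A * X 1 ^ B * X 2 ^ C'
      = MvPolynomial.monomial
          (Finsupp.single (0 : Fin 3) A + Finsupp.single 1 B + Finsupp.single 2 C') r := by
    rw [MvPolynomial.C_apply, MvPolynomial.X_pow_eq_monomial, MvPolynomial.X_pow_eq_monomial,
      MvPolynomial.X_pow_eq_monomial, MvPolynomial.monomial_mul, MvPolynomial.monomial_mul,
      MvPolynomial.monomial_mul]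
    simp
  rw [this, MvPolynomial.coeff_monomial]

lemma inner_T_sum {n : ℕ} (x : Fin n → ℝ) (S P : Finset (Fin n)) (k s : ℕ)
    (hle : (P \ S).card ≤ k - s) :
    ∑ T ∈ univ.filter (fun T : Finset (Fin n) => P ⊆ T ∧ S ⊆ T ∧ (T \ S).card = k - s),
        ∏ i ∈ T \ S, x i
      = (∏ j ∈ P \ S, x j) *
          ∑ W ∈ (univ \ (S ∪ P)).powersetCard (k - s - (P \ S).card), ∏ j ∈ W, x j := by
  rw [Finset.mul_sum]
  refine Finset.sum_nbij' (fun T => T \ (S ∪ P)) (fun W => (S ∪ P) ∪ W) ?_ ?_ ?_ ?_ ?_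
  · intro T hT
    rw [Finset.mem_filter] at hT
    obtain ⟨-, hPT, hST, hcard⟩ := hT
    rw [Finset.mem_powersetCard]
    constructor
    · intro i hi
      rw [Finset.mem_sdiff] at hi ⊢
      exact ⟨Finset.mem_univ _, hi.2⟩
    · show (T \ (S ∪ P)).card = k - s - (P \ S).card
      have hsub : P \ S ⊆ T \ S := Finset.sdiff_subset_sdiff hPT (le_refl S)
      have heq : T \ (S ∪ P) = (T \ S) \ (P \ S) := by
        ext i
        simp only [Finset.mem_sdiff, Finset.mem_union, not_or, not_and, not_not]
        tauto
      rw [heq, Finset.card_sdiff_of_subset hsub, hcard]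
  · intro W hW
    rw [Finset.mem_powersetCard] at hW
    obtain ⟨hWsub, hWcard⟩ := hW
    have hWd : ∀ i ∈ W, i ∉ S ∪ P := fun i hi => (Finset.mem_sdiff.mp (hWsub hi)).2
    rw [Finset.mem_filter]
    refine ⟨Finset.mem_univ _, ?_, ?_, ?_⟩
    · exact Finset.Subset.trans Finset.subset_union_right Finset.subset_union_left
    · exact Finset.Subset.trans Finset.subset_union_left Finset.subset_union_left
    · have heq : ((S ∪ P) ∪ W) \ S = (P \ S) ∪ W := by
        ext i
        simp only [Finset.mem_sdiff, Finset.mem_union]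
        constructor
        · rintro ⟨h1 | h2, hns⟩
          · rcases h1 with h | h
            · exact absurd h hns
            · exact Or.inl ⟨h, hns⟩
          · exact Or.inr h2
        · rintro (⟨h, hns⟩ | h)
          · exact ⟨Or.inl (Or.inr h), hns⟩
          · exact ⟨Or.inr h, fun hS => hWd i h (Finset.mem_union_left _ hS)⟩
      rw [heq, Finset.card_union_of_disjoint, hWcard, Nat.add_sub_cancel' hle]
      exact Finset.disjoint_left.mpr fun i hi hiW =>
        hWd i hiW (Finset.mem_union_right _ (Finset.mem_sdiff.mp hi).1)
  · intro T hT
    rw [Finset.mem_filter] at hT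
    exact Finset.union_sdiff_of_subset (Finset.union_subset hT.2.2.1 hT.2.1)
  · intro W hW
    rw [Finset.mem_powersetCard] at hW
    exact Finset.union_sdiff_cancel_left
      (Finset.disjoint_left.mpr fun i hi hiW => (Finset.mem_sdiff.mp (hW.1 hiW)).2 hi)
  · intro T hT
    rw [Finset.mem_filter] at hT
    obtain ⟨-, hPT, hST, hcard⟩ := hT
    have heq : T \ S = (P \ S) ∪ (T \ (S ∪ P)) := by
      ext i
      simp only [Finset.mem_sdiff, Finset.mem_union, not_or]
      constructor
      · rintro ⟨hiT, hns⟩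
        by_cases hiP : i ∈ P
        · exact Or.inl ⟨hiP, hns⟩
        · exact Or.inr ⟨hiT, hns, hiP⟩
      · rintro (⟨hiP, hns⟩ | ⟨hiT, hns, -⟩)
        · exact ⟨hPT hiP, hns⟩
        · exact ⟨hiT, hns⟩
    rw [heq, Finset.prod_union]
    exact Finset.disjoint_left.mpr fun i hi hi2 =>
      (Finset.mem_sdiff.mp hi2).2 (Finset.mem_union_right _ (Finset.mem_sdiff.mp hi).1)

lemma combinat {n : ℕ} (x : Fin n → ℝ) (S : Finset (Fin n)) (k s m : ℕ) (hs : S.card = s)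
    (d : Finset (Fin n) → ℝ) :
    (∑ T : Finset (Fin n), ∑ P ∈ T.powerset,
        if P.card = m ∧ (T \ S).card = k - s ∧ (T ∩ S).card = s
        then d P * ∏ i ∈ T \ S, x i else 0)
      = ∑ P ∈ (univ.powersetCard m).filter
            (fun P : Finset (Fin n) => (P \ S).card ≤ k - s),
          (∏ j ∈ P \ S, x j) * d P *
            ∑ W ∈ (univ \ (S ∪ P)).powersetCard (k - s - (P \ S).card), ∏ j ∈ W, x j := by
  have hTiff : ∀ T : Finset (Fin n), ((T ∩ S).card = s ↔ S ⊆ T) := by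
    intro T
    constructor
    · intro h
      have h2 : T ∩ S = S := Finset.eq_of_subset_of_card_le Finset.inter_subset_right
        (le_of_eq (hs.trans h.symm))
      exact h2 ▸ Finset.inter_subset_left
    · intro h
      rw [Finset.inter_eq_right.mpr h, hs]
  have step1 : ∀ T : Finset (Fin n),
      (∑ P ∈ T.powerset, if P.card = m ∧ (T \ S).card = k - s ∧ (T ∩ S).card = s
          then d P * ∏ i ∈ T \ S, x i else 0)
        = ∑ P : Finset (Fin n),
            if P ⊆ T ∧ S ⊆ T ∧ (T \ S).card = k - s ∧ P.card = m
            then d P * ∏ i ∈ T \ S, x i else 0 := by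
    intro T
    rw [show T.powerset = univ.filter (· ⊆ T) from by ext P; simp, Finset.sum_filter]
    refine Finset.sum_congr rfl fun P _ => ?_
    have hT := hTiff T
    split_ifs <;> first | rfl | (exfalso; tauto)
  simp only [step1]
  rw [Finset.sum_comm]
  rw [Finset.sum_filter,
    show (univ : Finset (Fin n)).powersetCard m = univ.filter (fun P => P.card = m) from by
      ext P; simp [Finset.mem_powersetCard_univ], Finset.sum_filter]
  refine Finset.sum_congr rfl fun P _ => ?_
  by_cases hm : P.card = m
  · simp only [hm, and_true, if_true]
    by_cases hle : (P \ S).card ≤ k - s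
    · rw [if_pos hle, ← Finset.sum_filter, ← Finset.mul_sum, inner_T_sum x S P k s hle]
      ring
    · rw [if_neg hle]
      refine Finset.sum_eq_zero fun T _ => ?_
      rw [if_neg]
      rintro ⟨h1, h2, h3⟩
      exact hle (le_of_le_of_eq
        (Finset.card_le_card (Finset.sdiff_subset_sdiff h1 (le_refl S))) h3)
  · rw [if_neg hm]
    refine Finset.sum_eq_zero fun T _ => ?_
    rw [if_neg]
    tauto


/-- The coefficient of `t₁^m t₂^{k-s} t₃^s` in
`F(t₁,t₂,t₃) = det(I + t₁ AᵀA diag(y) + diag(y))`, where `y_i = t₃` for `i ∈ S` and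
`y_i = x̂_i t₂` otherwise, equals the conditional-expectation sum used in the
derandomization of the sampling algorithm. -/
theorem stmt7 (m k n : ℕ) (hm : 1 ≤ m) (hmk : m ≤ k) (hkn : k ≤ n)
    (a : Fin n → Fin m → ℝ) (x : Fin n → ℝ) (hx : ∀ i, x i ∈ Set.Icc (0 : ℝ) 1)
    (S : Finset (Fin n)) (s : ℕ) (hs : S.card = s) (hsk : s ≤ k) :
    let y : Fin n → MvPolynomial (Fin 3) ℝ := fun i =>
      if i ∈ S then MvPolynomial.X 2 else MvPolynomial.C (x i) * MvPolynomial.X 1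
    let B : Matrix (Fin n) (Fin n) (MvPolynomial (Fin 3) ℝ) :=
      Matrix.of fun i j => MvPolynomial.C (∑ l, a i l * a j l)
    let F : MvPolynomial (Fin 3) ℝ :=
      (1 + (MvPolynomial.X 0 : MvPolynomial (Fin 3) ℝ) • (B * Matrix.diagonal y) + Matrix.diagonal y).det
    MvPolynomial.coeff
        (Finsupp.single (0 : Fin 3) m + Finsupp.single (1 : Fin 3) (k - s)
          + Finsupp.single (2 : Fin 3) s) F
      = ∑ R ∈ (Finset.univ.powersetCard m).filter
            (fun R : Finset (Fin n) => (R \ S).card ≤ k - s),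
          (∏ j ∈ R \ S, x j) * (∑ i ∈ R, vecMulVec (a i) (a i)).det *
            ∑ W ∈ (Finset.univ \ (S ∪ R)).powersetCard (k - s - (R \ S).card),
              ∏ j ∈ W, x j := by
  intro y B F
  classical
  have hy : ∀ i, y i = if i ∈ S then MvPolynomial.X 2
      else MvPolynomial.C (x i) * MvPolynomial.X 1 := fun _ => rfl
  set bmat : Matrix (Fin n) (Fin n) ℝ := Matrix.of fun i j => ∑ l, a i l * a j l with hbmat
  have hdetB : ∀ P : Finset (Fin n),
      (B.submatrix ((↑) : P → Fin n) ((↑) : P → Fin n)).det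
        = MvPolynomial.C ((bmat.submatrix ((↑) : P → Fin n) ((↑) : P → Fin n)).det) := by
    intro P
    have h1 : B.submatrix ((↑) : P → Fin n) ((↑) : P → Fin n)
        = (MvPolynomial.C : ℝ →+* MvPolynomial (Fin 3) ℝ).mapMatrix
            (bmat.submatrix ((↑) : P → Fin n) ((↑) : P → Fin n)) := by
      ext i j; rfl
    rw [h1, ← RingHom.map_det]
  have hprod : ∀ T : Finset (Fin n), (∏ i ∈ T, y i)
      = MvPolynomial.C (∏ i ∈ T \ S, x i) * MvPolynomial.X 1 ^ (T \ S).card *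
          MvPolynomial.X 2 ^ (T ∩ S).card := by
    intro T
    rw [← Finset.prod_inter_mul_prod_diff T S y]
    have h1 : (∏ i ∈ T ∩ S, y i) = MvPolynomial.X 2 ^ (T ∩ S).card := by
      rw [Finset.prod_congr rfl (fun i hi => ?_), Finset.prod_const]
      rw [hy i, if_pos (Finset.mem_inter.mp hi).2]
    have h2 : (∏ i ∈ T \ S, y i)
        = MvPolynomial.C (∏ i ∈ T \ S, x i) * MvPolynomial.X 1 ^ (T \ S).card := by
      rw [Finset.prod_congr rfl
        (fun i hi => by rw [hy i, if_neg (Finset.mem_sdiff.mp hi).2]),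
        Finset.prod_mul_distrib, Finset.prod_const, ← map_prod]
    rw [h1, h2]; ring
  have hF : F = ∑ T : Finset (Fin n),
      (∑ P ∈ T.powerset, (MvPolynomial.X 0 : MvPolynomial (Fin 3) ℝ) ^ P.card *
          MvPolynomial.C ((bmat.submatrix ((↑) : P → Fin n) ((↑) : P → Fin n)).det)) *
        (MvPolynomial.C (∏ i ∈ T \ S, x i) * MvPolynomial.X 1 ^ (T \ S).card *
          MvPolynomial.X 2 ^ (T ∩ S).card) := by
    have h0 : F = (1 + ((MvPolynomial.X 0 : MvPolynomial (Fin 3) ℝ) • B + 1)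
        * Matrix.diagonal y).det := by
      show (1 + (MvPolynomial.X 0 : MvPolynomial (Fin 3) ℝ) • (B * Matrix.diagonal y)
        + Matrix.diagonal y).det = _
      rw [add_mul, one_mul, Matrix.smul_mul, add_assoc]
    rw [h0, det_one_add_eq_sum]
    refine Finset.sum_congr rfl fun T _ => ?_
    rw [submatrix_mul_diagonal, Matrix.det_mul, Matrix.det_diagonal]
    congr 1
    · simp only [Matrix.submatrix_add, Matrix.submatrix_smul, Pi.add_apply, Pi.smul_apply,
        Matrix.submatrix_one _ Subtype.val_injective]
      rw [add_comm, det_one_add_smul_submatrix]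
      exact Finset.sum_congr rfl fun P _ => by rw [hdetB]
    · exact (Finset.prod_coe_sort T y).trans (hprod T)
  have hterm : ∀ (dd p : ℝ) (A B2 C2 : ℕ),
      (MvPolynomial.X 0 : MvPolynomial (Fin 3) ℝ) ^ A * MvPolynomial.C dd *
          (MvPolynomial.C p * MvPolynomial.X 1 ^ B2 * MvPolynomial.X 2 ^ C2)
        = MvPolynomial.C (dd * p) * MvPolynomial.X 0 ^ A * MvPolynomial.X 1 ^ B2 *
            MvPolynomial.X 2 ^ C2 := by
    intros dd p A B2 C2; rw [MvPolynomial.C_mul]; ring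
  rw [hF, MvPolynomial.coeff_sum]
  simp only [Finset.sum_mul, MvPolynomial.coeff_sum, hterm, coeff_C_mul_X_pows,
    finsupp_triple_eq_iff]
  refine (combinat x S k s m hs
      (fun P => ((bmat.submatrix ((↑) : P → Fin n) ((↑) : P → Fin n)).det))).trans ?_
  refine Finset.sum_congr rfl fun P hP => ?_
  rw [Finset.mem_filter, Finset.mem_powersetCard_univ] at hP
  rw [det_gram a P hP.1]
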